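/- arXiv:0912.2865 — 4 statements merged into one kernel-verified Lean document; each statement's English description precedes it below -/
import Mathlib

section
/- Let f : A₁ → A₂ be an isogeny of abelian varieties over a field k of characteristic 0, of degree d. Then the induced map f* : Br(Ā₂) → Br(Ā₁) on the Brauer groups of the base changes to an algebraic closure k̄ is a surjective homomorphism of Galois modules whose kernel is killed by d; in particular it restricts to an isomorphism on the subgroups of elements of order coprime to d. -/
/-!
STATEMENT 1: Let `f : A₁ → A₂` be an isogeny of abelian varieties of degree
`d` over a field `k` of characteristic 0.  Then the induced map
`f* : Br(Ā₂) → Br(Ā₁)` is a surjective homomorphism of `Γ_k`-modules whose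
kernel is killed by `d`; in particular it restricts to an isomorphism on
the subgroups of elements of order coprime to `d`.

Abelian varieties and étale cohomology are not available in Mathlib, so
the Brauer groups `Br(Ā₁)`, `Br(Ā₂)` with their `Γ_k`-actions and the
pullback `f*` along the degree-`d` isogeny `f : A₁ → A₂` are taken as
given data, together with the facts (established in the paper for these
Brauer groups) that both are isomorphic to `(ℚ/ℤ)^m` (`m = r(2r−1) − ρ`)
and that `f*` is `Γ_k`-equivariant and admits a corestriction `cores`
with `cores ∘ f* = d` (restriction-corestriction for the degree-`d`
isogeny).
-/


lemma circle_tors (x : AddCircle (1:ℚ)) : ∃ n : ℕ, 0 < n ∧ n • x = 0 := by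
  induction x using QuotientAddGroup.induction_on with
  | H q =>
    refine ⟨q.den, q.pos, ?_⟩
    have h1 : (q.den : ℕ) • (q : AddCircle (1:ℚ)) = ((q.den • q : ℚ) : AddCircle (1:ℚ)) := by
      rw [← AddCircle.coe_nsmul]
    rw [h1, AddCircle.coe_eq_zero_iff]
    refine ⟨q.num, ?_⟩
    rw [zsmul_eq_mul, mul_one, nsmul_eq_mul]
    have := Rat.mul_den_eq_num q
    rw [mul_comm] at this
    exact_mod_cast this.symm

lemma circle_fin (N : ℕ) (hN : 0 < N) : {u : AddCircle (1:ℚ) | N • u = 0}.Finite := by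
  haveI : Fact ((0:ℚ) < 1) := ⟨one_pos⟩
  have : {u : AddCircle (1:ℚ) | N • u = 0} ⊆
      ⋃ n ∈ N.divisors, {u : AddCircle (1:ℚ) | addOrderOf u = n} := by
    intro u hu
    have h1 : addOrderOf u ∣ N := addOrderOf_dvd_of_nsmul_eq_zero hu
    exact Set.mem_biUnion (Nat.mem_divisors.2 ⟨h1, hN.ne'⟩) rfl
  exact Set.Finite.subset (Set.Finite.biUnion (N.divisors.finite_toSet)
    (fun n hn => AddCircle.finite_setOfPred_addOrderOf_eq (1:ℚ)
      (Nat.pos_of_mem_divisors hn))) this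

lemma circle_div (x : AddCircle (1:ℚ)) (n : ℕ) (hn : 0 < n) : ∃ z, n • z = x :=
  ⟨DivisibleBy.div x (n:ℤ), by
    have := DivisibleBy.div_cancel x (n := (n:ℤ)) (by exact_mod_cast hn.ne')
    rw [← natCast_zsmul]; exact this⟩

lemma pi_tors {m : ℕ} (x : Fin m → AddCircle (1:ℚ)) : ∃ n : ℕ, 0 < n ∧ n • x = 0 := by
  choose n hn hnx using fun i => circle_tors (x i)
  refine ⟨∏ i, n i, Finset.prod_pos (fun i _ => hn i), ?_⟩
  ext i
  simp only [Pi.smul_apply, Pi.zero_apply]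
  obtain ⟨c, hc⟩ := Finset.dvd_prod_of_mem n (Finset.mem_univ i)
  rw [hc, mul_comm, ← smul_smul, hnx i, smul_zero]

lemma pi_div {m : ℕ} (x : Fin m → AddCircle (1:ℚ)) (n : ℕ) (hn : 0 < n) :
    ∃ z, n • z = x := by
  choose z hz using fun i => circle_div (x i) n hn
  refine ⟨z, ?_⟩
  ext i
  simp only [Pi.smul_apply]
  exact hz i

lemma pi_fin {m : ℕ} (N : ℕ) (hN : 0 < N) :
    {x : Fin m → AddCircle (1:ℚ) | N • x = 0}.Finite := by
  apply Set.Finite.subset (Set.Finite.pi (fun _ : Fin m => circle_fin N hN))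
  intro x hx
  rw [Set.mem_pi]
  intro i _
  have := congrFun hx i
  exact this

/-- The `N`-torsion subgroup. -/
def torsSub (N : ℕ) (G : Type) [AddCommGroup G] : AddSubgroup G where
  carrier := {x | N • x = 0}
  add_mem' := by
    intro a b ha hb
    simp only [Set.mem_setOf_eq, smul_add] at *
    rw [ha, hb, add_zero]
  zero_mem' := by simp
  neg_mem' := by
    intro a ha
    simp only [Set.mem_setOf_eq, smul_neg] at *
    rw [ha, neg_zero]

lemma mem_torsSub {N : ℕ} {G : Type} [AddCommGroup G] {x : G} :
    x ∈ torsSub N G ↔ N • x = 0 := Iff.rfl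

lemma surj_main {A B : Type} [AddCommGroup A] [AddCommGroup B] (f : A →+ B)
    (e : A ≃+ B)
    (htorB : ∀ y : B, ∃ n : ℕ, 0 < n ∧ n • y = 0)
    (hdivA : ∀ x : A, ∀ n : ℕ, 0 < n → ∃ z, n • z = x)
    (hdivB : ∀ y : B, ∀ n : ℕ, 0 < n → ∃ z, n • z = y)
    (hfinA : ∀ N : ℕ, 0 < N → Finite (torsSub N A))
    (d : ℕ) (hd : 0 < d)
    (hker : ∀ x, f x = 0 → d • x = 0) :
    Function.Surjective f := by
  by_contra hns
  simp only [Function.Surjective, not_forall] at hns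
  obtain ⟨y, hy⟩ := hns
  rw [not_exists] at hy
  set D : AddSubgroup B := f.range with hD
  have hyD : y ∉ D := by
    rintro ⟨x, rfl⟩
    exact hy x rfl
  set Q := B ⧸ D with hQ
  set π : B →+ Q := QuotientAddGroup.mk' D with hπ
  -- finiteness of torsion in B, via `e`
  have torsEquiv : ∀ N : ℕ, (torsSub N A) ≃ (torsSub N B) := by
    intro N
    refine ⟨fun x => ⟨e x.1, ?_⟩, fun y => ⟨e.symm y.1, ?_⟩, fun x => ?_, fun y => ?_⟩
    · rw [mem_torsSub, ← map_nsmul, x.2, map_zero]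
    · rw [mem_torsSub, ← map_nsmul, y.2, map_zero]
    · ext; simp
    · ext; simp
  have hfinB : ∀ N : ℕ, 0 < N → Finite (torsSub N B) := by
    intro N hN
    haveI := hfinA N hN
    exact Finite.of_equiv _ (torsEquiv N)
  -- `Q` is divisible
  have hQdiv : ∀ (q : Q) (n : ℕ), 0 < n → ∃ z : Q, n • z = q := by
    intro q n hn
    obtain ⟨v, rfl⟩ := QuotientAddGroup.mk'_surjective D q
    obtain ⟨z, hz⟩ := hdivB v n hn
    exact ⟨π z, by rw [← map_nsmul, hz]⟩
  -- the image of `y` in `Q` is a nonzero torsion element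
  have hπy : π y ≠ 0 := by
    intro h
    exact hyD ((QuotientAddGroup.eq_zero_iff y).mp h)
  have hfo : IsOfFinAddOrder (π y) := by
    obtain ⟨n, hn, hny⟩ := htorB y
    exact isOfFinAddOrder_iff_nsmul_eq_zero.2 ⟨n, hn, by rw [← map_nsmul, hny, map_zero]⟩
  set t := addOrderOf (π y) with ht
  have htpos : 0 < t := hfo.addOrderOf_pos
  have ht1 : t ≠ 1 := by
    intro h
    apply hπy
    have := addOrderOf_nsmul_eq_zero (π y)
    rw [← ht, h, one_nsmul] at this
    exact this
  set p := t.minFac with hp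
  have pp : p.Prime := Nat.minFac_prime ht1
  set q0 : Q := (t / p) • (π y) with hq0def
  have hq0 : q0 ≠ 0 := by
    intro h
    have hdvd : t ∣ t / p := addOrderOf_dvd_of_nsmul_eq_zero h
    have h1 : 0 < t / p := Nat.div_pos (Nat.minFac_le htpos) pp.pos
    have h2 : t / p < t := Nat.div_lt_self htpos pp.one_lt
    exact absurd (Nat.le_of_dvd h1 hdvd) (not_le.mpr h2)
  have hpq0 : p • q0 = 0 := by
    rw [hq0def, smul_smul, Nat.mul_div_cancel' t.minFac_dvd]
    exact addOrderOf_nsmul_eq_zero (π y)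
  -- a sequence of successive `p`-divisions of `q0`
  have hQdivp : ∀ q : Q, ∃ z : Q, p • z = q := fun q => hQdiv q p pp.pos
  choose sdiv hsdiv using hQdivp
  set seq : ℕ → Q := fun k => Nat.rec q0 (fun _ prev => sdiv prev) k with hseqdef
  have hseq0 : seq 0 = q0 := rfl
  have hseqS : ∀ k, p • seq (k + 1) = seq k := fun k => hsdiv (seq k)
  have h1 : ∀ k, p ^ k • seq k = q0 := by
    intro k
    induction k with
    | zero => simpa using hseq0
    | succ k ih =>
      rw [pow_succ, ← smul_smul, hseqS k]
      exact ih
  have h2 : ∀ k, p ^ (k + 1) • seq k = 0 := by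
    intro k
    rw [pow_succ', ← smul_smul, h1 k]
    exact hpq0
  have h3 : ∀ k, addOrderOf (seq k) = p ^ (k + 1) := by
    intro k
    have hdvd : addOrderOf (seq k) ∣ p ^ (k + 1) := addOrderOf_dvd_of_nsmul_eq_zero (h2 k)
    obtain ⟨i, hik, hio⟩ := (Nat.dvd_prime_pow pp).mp hdvd
    rcases Nat.lt_or_ge i (k + 1) with hlt | hge
    · exfalso
      have : p ^ k • seq k = 0 := by
        apply addOrderOf_dvd_iff_nsmul_eq_zero.mp
        rw [hio]
        exact pow_dvd_pow p (Nat.lt_succ_iff.mp hlt)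
      rw [h1 k] at this
      exact hq0 this
    · have : i = k + 1 := le_antisymm hik hge
      rw [hio, this]
  -- the key cardinality bound
  have key : ∀ k : ℕ, p ^ (k + 1) ≤ Nat.card (torsSub d A) := by
    intro k
    set N := p ^ (k + 1) with hN
    have hNpos : 0 < N := pow_pos pp.pos _
    haveI : Finite (torsSub N A) := hfinA N hNpos
    haveI : Finite (torsSub N B) := hfinB N hNpos
    haveI : Finite (torsSub d A) := hfinA d hd
    set f' : torsSub N A →+ B := f.comp (torsSub N A).subtype with hf'
    set π' : torsSub N B →+ Q := π.comp (torsSub N B).subtype with hπ'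
    haveI : Finite π'.range := Set.Finite.to_subtype (Set.finite_range π')
    haveI : Finite f'.range := Set.Finite.to_subtype (Set.finite_range f')
    -- cardinal identities
    have E1 : Nat.card (torsSub N A) = Nat.card f'.range * Nat.card f'.ker := by
      rw [AddSubgroup.card_eq_card_quotient_mul_card_addSubgroup f'.ker,
        Nat.card_congr (QuotientAddGroup.quotientKerEquivRange f').toEquiv]
    have E2 : Nat.card (torsSub N B) = Nat.card π'.range * Nat.card π'.ker := by
      rw [AddSubgroup.card_eq_card_quotient_mul_card_addSubgroup π'.ker,
        Nat.card_congr (QuotientAddGroup.quotientKerEquivRange π').toEquiv]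
    have E3 : Nat.card (torsSub N B) = Nat.card (torsSub N A) :=
      (Nat.card_congr (torsEquiv N)).symm
    -- I1 : ker f' embeds into the d-torsion of A
    have I1 : Nat.card f'.ker ≤ Nat.card (torsSub d A) := by
      have inj : Function.Injective
          (fun x : f'.ker => (⟨x.1.1, hker _ x.2⟩ : torsSub d A)) := by
        intro a b hab
        have hab := congrArg Subtype.val hab
        exact Subtype.ext (Subtype.ext hab)
      exact Nat.card_le_card_of_injective _ inj
    -- I2 : range f' embeds into ker π'
    have I2 : Nat.card f'.range ≤ Nat.card π'.ker := by
      have mem1 : ∀ b : f'.range, N • b.1 = 0 := by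
        rintro ⟨b, x, rfl⟩
        show N • f' x = 0
        rw [← map_nsmul, hf']
        simp only [AddMonoidHom.comp_apply, AddSubgroup.coe_subtype]
        have : (N • x : torsSub N A).1 = 0 := by
          rw [← mem_torsSub.mp x.2]; rfl
        rw [this, map_zero]
      have mem2 : ∀ b : f'.range, (⟨b.1, mem1 b⟩ : torsSub N B) ∈ π'.ker := by
        rintro ⟨b, x, rfl⟩
        show π _ = 0
        apply (QuotientAddGroup.eq_zero_iff _).mpr
        exact ⟨x.1, rfl⟩
      have inj : Function.Injective
          (fun b : f'.range => (⟨⟨b.1, mem1 b⟩, mem2 b⟩ : π'.ker)) := by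
        intro a b hab
        have hab := congrArg (fun z : π'.ker => z.1.1) hab
        exact Subtype.ext hab
      haveI : Finite π'.ker := Subtype.finite
      exact Nat.card_le_card_of_injective _ inj
    -- I3 : Fin N embeds into range π'
    have hsurjN : ∀ q : Q, N • q = 0 → q ∈ π'.range := by
      intro q hqN
      obtain ⟨v, rfl⟩ := QuotientAddGroup.mk'_surjective D q
      have : π (N • v) = 0 := by rw [map_nsmul]; exact hqN
      have hNv : N • v ∈ D := (QuotientAddGroup.eq_zero_iff _).mp this
      obtain ⟨u, hu⟩ := hNv
      obtain ⟨u', hu'⟩ := hdivA u N hNpos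
      have hmem : N • (v - f u') = 0 := by
        rw [smul_sub, ← map_nsmul, hu', hu, sub_self]
      refine ⟨⟨v - f u', hmem⟩, ?_⟩
      show π (v - f u') = π v
      rw [map_sub]
      have : π (f u') = 0 := (QuotientAddGroup.eq_zero_iff _).mpr ⟨u', rfl⟩
      rw [this, sub_zero]
    have I3 : N ≤ Nat.card π'.range := by
      have memr : ∀ j : Fin N, ((j : ℕ) • seq k) ∈ π'.range := by
        intro j
        apply hsurjN
        have hNs : N • seq k = 0 := h2 k
        rw [smul_comm, hNs, smul_zero]
      have inj : Function.Injective (fun j : Fin N => (⟨(j : ℕ) • seq k, memr j⟩ : π'.range)) := by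
        intro j1 j2 hj
        have hj' : (j1 : ℕ) • seq k = (j2 : ℕ) • seq k := congrArg Subtype.val hj
        have hz : ((j1 : ℤ) - (j2 : ℤ)) • seq k = 0 := by
          rw [sub_smul, natCast_zsmul, natCast_zsmul, hj', sub_self]
        have hdvd : ((N : ℕ) : ℤ) ∣ (j1 : ℤ) - (j2 : ℤ) := by
          have := addOrderOf_dvd_iff_zsmul_eq_zero.mpr hz
          rwa [h3 k, ← hN] at this
        have habs : |(j1 : ℤ) - (j2 : ℤ)| < (N : ℤ) := by
          rw [abs_sub_lt_iff]
          constructor <;> [skip; skip] <;>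
            · have h1 := j1.2
              have h2 := j2.2
              omega
        have := Int.eq_zero_of_abs_lt_dvd hdvd habs
        have : (j1 : ℤ) = (j2 : ℤ) := by omega
        exact Fin.ext (by exact_mod_cast this)
      have := Nat.card_le_card_of_injective _ inj
      simpa using this
    -- final arithmetic
    have hrfpos : 0 < Nat.card f'.range := Nat.card_pos
    have hmain : Nat.card π'.range * Nat.card f'.range ≤ Nat.card f'.range * Nat.card f'.ker := by
      calc Nat.card π'.range * Nat.card f'.range
          ≤ Nat.card π'.range * Nat.card π'.ker := Nat.mul_le_mul_left _ I2
        _ = Nat.card (torsSub N B) := E2.symm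
        _ = Nat.card (torsSub N A) := E3
        _ = Nat.card f'.range * Nat.card f'.ker := E1
    have hπr : Nat.card π'.range ≤ Nat.card f'.ker := by
      rw [mul_comm (Nat.card f'.range) (Nat.card f'.ker)] at hmain
      exact Nat.le_of_mul_le_mul_right hmain hrfpos
    calc (N : ℕ) ≤ Nat.card π'.range := I3
      _ ≤ Nat.card f'.ker := hπr
      _ ≤ Nat.card (torsSub d A) := I1
  -- contradiction: `p ^ (k+1)` is unbounded
  set κ := Nat.card (torsSub d A) with hκ
  have hcontr := key κ
  have : κ < 2 ^ (κ + 1) := lt_of_lt_of_le (Nat.lt_two_pow_self (n := κ)) (Nat.pow_le_pow_right (by norm_num) (Nat.le_succ κ))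
  have h2p : 2 ^ (κ + 1) ≤ p ^ (κ + 1) := Nat.pow_le_pow_left pp.two_le _
  omega


theorem statement_1 (k : Type) [Field k] [CharZero k]
    -- `Br(Ā₁)` and `Br(Ā₂)` with their `Γ_k`-actions:
    (BrA₁ BrA₂ : Type) [AddCommGroup BrA₁] [AddCommGroup BrA₂]
    (ρ₁ : (AlgebraicClosure k ≃ₐ[k] AlgebraicClosure k) →* Multiplicative (AddAut BrA₁))
    (ρ₂ : (AlgebraicClosure k ≃ₐ[k] AlgebraicClosure k) →* Multiplicative (AddAut BrA₂))
    -- both are isomorphic to `(ℚ/ℤ)^m`: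
    (m : ℕ) (e₁ : BrA₁ ≃+ (Fin m → AddCircle (1 : ℚ)))
    (e₂ : BrA₂ ≃+ (Fin m → AddCircle (1 : ℚ)))
    -- the degree of the isogeny:
    (d : ℕ) (hd : 0 < d)
    -- the pullback `f*` along the isogeny `f : A₁ → A₂`, a map of
    -- `Γ_k`-modules:
    (fstar : BrA₂ →+ BrA₁)
    (hequiv : ∀ σ x, fstar (Multiplicative.toAdd (ρ₂ σ) x) = Multiplicative.toAdd (ρ₁ σ) (fstar x))
    -- restriction-corestriction for the degree-`d` isogeny `f`:
    (cores : BrA₁ →+ BrA₂)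
    (hcores : ∀ x : BrA₂, cores (fstar x) = (d : ℤ) • x) :
    -- `f*` is surjective and its kernel is killed by `d` …
    Function.Surjective fstar ∧
    (∀ x : BrA₂, fstar x = 0 → (d : ℤ) • x = 0) ∧
    -- … so it restricts to an isomorphism on elements of order coprime to `d`:
    Set.BijOn fstar
      {x : BrA₂ | ∃ n : ℕ, 0 < n ∧ n.Coprime d ∧ n • x = 0}
      {y : BrA₁ | ∃ n : ℕ, 0 < n ∧ n.Coprime d ∧ n • y = 0} := by
  -- kernel of `fstar` is killed by `d`
  have hker' : ∀ x : BrA₂, fstar x = 0 → (d : ℤ) • x = 0 := by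
    intro x h
    rw [← hcores x, h, map_zero]
  have hkerN : ∀ x : BrA₂, fstar x = 0 → d • x = 0 := by
    intro x h
    have := hker' x h
    rwa [natCast_zsmul] at this
  -- transfer the structural facts about `(ℚ/ℤ)^m` through `e₁`, `e₂`
  have htor₁ : ∀ y : BrA₁, ∃ n : ℕ, 0 < n ∧ n • y = 0 := by
    intro y
    obtain ⟨n, hn, hny⟩ := pi_tors (e₁ y)
    refine ⟨n, hn, e₁.injective ?_⟩
    rw [map_nsmul, hny, map_zero]
  have hdiv₂ : ∀ (x : BrA₂) (n : ℕ), 0 < n → ∃ z, n • z = x := by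
    intro x n hn
    obtain ⟨w, hw⟩ := pi_div (e₂ x) n hn
    exact ⟨e₂.symm w, e₂.injective (by rw [map_nsmul, AddEquiv.apply_symm_apply, hw])⟩
  have hdiv₁ : ∀ (y : BrA₁) (n : ℕ), 0 < n → ∃ z, n • z = y := by
    intro y n hn
    obtain ⟨w, hw⟩ := pi_div (e₁ y) n hn
    exact ⟨e₁.symm w, e₁.injective (by rw [map_nsmul, AddEquiv.apply_symm_apply, hw])⟩
  have hfin₂ : ∀ N : ℕ, 0 < N → Finite (torsSub N BrA₂) := by
    intro N hN
    haveI := Set.Finite.to_subtype (pi_fin (m := m) N hN)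
    apply Finite.of_injective
      (fun x : torsSub N BrA₂ =>
        (⟨e₂ x.1, by rw [Set.mem_setOf_eq, ← map_nsmul, mem_torsSub.mp x.2, map_zero]⟩ :
          {v : Fin m → AddCircle (1:ℚ) | N • v = 0}))
    intro a b hab
    rw [Subtype.mk.injEq] at hab
    exact Subtype.ext (e₂.injective hab)
  -- surjectivity, from the main counting lemma
  have hsurj : Function.Surjective fstar :=
    surj_main fstar (e₂.trans e₁.symm) htor₁ hdiv₂ hdiv₁ hfin₂ d hd hkerN
  refine ⟨hsurj, hker', ?_, ?_, ?_⟩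
  · -- MapsTo
    rintro x ⟨n, hn, hc, hnx⟩
    exact ⟨n, hn, hc, by rw [← map_nsmul, hnx, map_zero]⟩
  · -- InjOn
    rintro x ⟨n, hn, hc, hnx⟩ x' ⟨n', hn', hc', hnx'⟩ heq
    have h0 : fstar (x - x') = 0 := by rw [map_sub, heq, sub_self]
    have hd0 : (d : ℤ) • (x - x') = 0 := hker' _ h0
    have hnn' : (((n * n' : ℕ)) : ℤ) • (x - x') = 0 := by
      rw [natCast_zsmul, smul_sub]
      have e1 : (n * n') • x = 0 := by rw [mul_comm, ← smul_smul, hnx, smul_zero]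
      have e2 : (n * n') • x' = 0 := by rw [← smul_smul, hnx', smul_zero]
      rw [e1, e2, sub_self]
    have hco : IsCoprime (((n * n' : ℕ)) : ℤ) ((d : ℕ) : ℤ) := by
      rw [Int.isCoprime_iff_gcd_eq_one, Int.gcd_natCast_natCast]
      exact Nat.Coprime.mul hc hc'
    obtain ⟨a, b, hab⟩ := hco
    have hz : x - x' = 0 := by
      calc x - x' = (1 : ℤ) • (x - x') := (one_zsmul _).symm
        _ = (a * ((n * n' : ℕ) : ℤ) + b * (d : ℤ)) • (x - x') := by rw [hab]
        _ = a • (((n * n' : ℕ) : ℤ) • (x - x')) + b • ((d : ℤ) • (x - x')) := by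
            rw [add_smul, mul_smul, mul_smul]
        _ = 0 := by rw [hnn', hd0, smul_zero, smul_zero, add_zero]
    exact sub_eq_zero.mp hz
  · -- SurjOn
    rintro y' ⟨n, hn, hc, hny⟩
    obtain ⟨x, hx⟩ := hsurj y'
    have h1 : fstar (n • x) = 0 := by rw [map_nsmul, hx, hny]
    have h2 : (d : ℤ) • (n • x) = 0 := hker' _ h1
    have hco : IsCoprime ((n : ℕ) : ℤ) ((d : ℕ) : ℤ) := by
      rw [Int.isCoprime_iff_gcd_eq_one, Int.gcd_natCast_natCast]
      exact hc
    obtain ⟨a, b, hab⟩ := hco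
    set x' : BrA₂ := (b * (d : ℤ)) • x with hx'def
    have hfx' : fstar x' = y' := by
      rw [hx'def, map_zsmul, hx]
      have hb : b * (d : ℤ) = 1 - a * (n : ℤ) := by linarith
      rw [hb, sub_smul, one_zsmul]
      have : (a * (n : ℤ)) • y' = 0 := by rw [mul_smul, natCast_zsmul, hny, smul_zero]
      rw [this, sub_zero]
    have hnx' : n • x' = 0 := by
      calc n • x' = (n : ℤ) • ((b * (d : ℤ)) • x) := by rw [natCast_zsmul]
        _ = ((n : ℤ) * (b * (d : ℤ))) • x := smul_smul _ _ _
        _ = (b * ((d : ℤ) * (n : ℤ))) • x := by ring_nf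
        _ = b • ((d : ℤ) • ((n : ℤ) • x)) := by rw [mul_smul, mul_smul]
        _ = b • ((d : ℤ) • (n • x)) := by rw [natCast_zsmul x n]
        _ = 0 := by rw [h2, smul_zero]
    exact ⟨x', ⟨n, hn, hc, hnx'⟩, hfx'⟩
end

section
/- Any homomorphism of abelian groups (ℚ/ℤ)^m → (ℚ/ℤ)^m with finite kernel is surjective. -/
/-!
STATEMENT 2: Any homomorphism of abelian groups (ℚ/ℤ)^m → (ℚ/ℤ)^m with finite
kernel is surjective.  Here ℚ/ℤ is realized as `AddCircle (1 : ℚ)` and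
`(ℚ/ℤ)^m` as `Fin m → AddCircle (1 : ℚ)`.
-/
local instance : Fact (0 < (1:ℚ)) := ⟨one_pos⟩

lemma addCircle_isOfFinAddOrder (x : AddCircle (1:ℚ)) : IsOfFinAddOrder x := by
  induction x using QuotientAddGroup.induction_on with
  | H q =>
    rw [isOfFinAddOrder_iff_nsmul_eq_zero]
    refine ⟨q.den, q.pos, ?_⟩
    have h1 : ((q.den : ℚ)) * q = (q.num : ℚ) := by
      rw [mul_comm]
      exact_mod_cast Rat.mul_den_eq_num q
    rw [← AddCircle.coe_nsmul]
    rw [AddCircle.coe_eq_zero_iff]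
    exact ⟨q.num, by rw [zsmul_eq_mul, mul_one, ← h1, nsmul_eq_mul]⟩

lemma addCircle_torsion_finite {n : ℕ} (hn : 0 < n) :
    {x : AddCircle (1:ℚ) | n • x = 0}.Finite := by
  have hsub : {x : AddCircle (1:ℚ) | n • x = 0} ⊆
      ⋃ d ∈ Set.Icc 1 n, {x : AddCircle (1:ℚ) | addOrderOf x = d} := by
    intro x hx
    have hfin : IsOfFinAddOrder x := addCircle_isOfFinAddOrder x
    have hdvd : addOrderOf x ∣ n := addOrderOf_dvd_of_nsmul_eq_zero hx
    simp only [Set.mem_iUnion, Set.mem_Icc]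
    exact ⟨addOrderOf x, ⟨hfin.addOrderOf_pos, Nat.le_of_dvd hn hdvd⟩, rfl⟩
  exact Set.Finite.subset (Set.Finite.biUnion (Set.finite_Icc 1 n)
    (fun d hd => AddCircle.finite_setOfPred_addOrderOf_eq (p := (1:ℚ)) (n := d) hd.1)) hsub

theorem statement_2 (m : ℕ) (hm : 0 < m)
    (j : (Fin m → AddCircle (1 : ℚ)) →+ (Fin m → AddCircle (1 : ℚ)))
    (hker : (j.ker : Set (Fin m → AddCircle (1 : ℚ))).Finite) :
    Function.Surjective j := by
  haveI : Fact (0 < (1:ℚ)) := ⟨one_pos⟩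
  intro y
  -- `y` has finite order
  obtain ⟨n, hn, hny⟩ : ∃ n : ℕ, 0 < n ∧ n • y = 0 := by
    refine ⟨∏ i, addOrderOf (y i),
      Finset.prod_pos fun i _ => (addCircle_isOfFinAddOrder (y i)).addOrderOf_pos, ?_⟩
    funext i
    have hd : addOrderOf (y i) ∣ ∏ i, addOrderOf (y i) :=
      Finset.dvd_prod_of_mem _ (Finset.mem_univ i)
    simpa using addOrderOf_dvd_iff_nsmul_eq_zero.mp hd
  -- multiplication by n as a hom
  set σ : (Fin m → AddCircle (1:ℚ)) →+ (Fin m → AddCircle (1:ℚ)) :=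
    AddMonoidHom.mk' (fun x => n • x) (fun a b => nsmul_add a b n) with hσ
  have hσ_apply : ∀ x, σ x = n • x := fun x => rfl
  set Tn := σ.ker with hTn
  set A := (σ.comp j).ker with hA
  have hmemA : ∀ x, x ∈ A ↔ n • j x = 0 := fun x => Iff.rfl
  have hmemTn : ∀ x, x ∈ Tn ↔ n • x = 0 := fun x => Iff.rfl
  -- Tn is finite
  have hTn_fin : (Tn : Set (Fin m → AddCircle (1:ℚ))).Finite := by
    have heq : (Tn : Set (Fin m → AddCircle (1:ℚ))) =
        Set.pi Set.univ (fun _ : Fin m => {t : AddCircle (1:ℚ) | n • t = 0}) := by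
      ext x
      simp only [SetLike.mem_coe, hmemTn, Set.mem_pi, Set.mem_univ, forall_true_left,
        Set.mem_setOf_eq, funext_iff]
      exact forall_congr' fun i => by simp
    rw [heq]
    exact Set.Finite.pi fun i => addCircle_torsion_finite hn
  -- divisibility
  have hdiv : ∀ t : Fin m → AddCircle (1:ℚ), ∃ x, n • x = t := by
    intro t
    refine ⟨fun i => DivisibleBy.div (t i) (n:ℤ), ?_⟩
    funext i
    have h0 : ((n:ℤ)) ≠ 0 := by exact_mod_cast hn.ne'
    have := DivisibleBy.div_cancel (t i) h0
    simpa [← natCast_zsmul] using this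
  -- K ≤ A and Tn ≤ A
  have hKA : j.ker ≤ A := fun x hx => by
    rw [hmemA]; rw [AddMonoidHom.mem_ker] at hx; rw [hx, smul_zero]
  have hTnA : Tn ≤ A := fun x hx => by
    rw [hmemA, ← map_nsmul]; rw [hmemTn] at hx; rw [hx, map_zero]
  -- image of A under σ is exactly ker j
  have hmapσ : A.map σ = j.ker := by
    apply le_antisymm
    · rintro t ⟨x, hx, rfl⟩
      rw [AddMonoidHom.mem_ker, hσ_apply, map_nsmul]
      exact (hmemA x).mp hx
    · intro t ht
      obtain ⟨x, hxt⟩ := hdiv t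
      rw [AddMonoidHom.mem_ker] at ht
      exact AddSubgroup.mem_map.mpr ⟨x, (hmemA x).mpr (by rw [← map_nsmul, hxt]; exact ht), hxt⟩
  -- image of A under j is inside Tn
  have hjATn : A.map j ≤ Tn := by
    rintro t ⟨x, hx, rfl⟩
    exact (hmemA x).mp hx
  -- A is finite
  have hA_fin : (A : Set (Fin m → AddCircle (1:ℚ))).Finite := by
    have hfib : ∀ t, (j ⁻¹' {t}).Finite := by
      intro t
      by_cases hne : (j ⁻¹' {t}).Nonempty
      · obtain ⟨x₀, hx₀⟩ := hne
        simp only [Set.mem_preimage, Set.mem_singleton_iff] at hx₀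
        have hsub : j ⁻¹' {t} ⊆ (fun k => x₀ + k) '' (j.ker : Set (Fin m → AddCircle (1:ℚ))) := by
          intro x hx
          simp only [Set.mem_preimage, Set.mem_singleton_iff] at hx
          exact ⟨x - x₀, by simp [AddMonoidHom.mem_ker, map_sub, hx, hx₀], by show x₀ + (x - x₀) = x; rw [add_comm]; exact sub_add_cancel x x₀⟩
        exact ((hker.image _).subset hsub)
      · rw [Set.not_nonempty_iff_eq_empty] at hne
        rw [hne]; exact Set.finite_empty
    have hsub : (A : Set (Fin m → AddCircle (1:ℚ))) ⊆
        ⋃ t ∈ (Tn : Set (Fin m → AddCircle (1:ℚ))), j ⁻¹' {t} := by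
      intro x hx
      have : j x ∈ Tn := by rw [hmemTn]; exact (hmemA x).mp hx
      exact Set.mem_biUnion this rfl
    exact (hTn_fin.biUnion fun t _ => hfib t).subset hsub
  haveI : Finite A := hA_fin.to_subtype
  haveI : Finite j.ker := hker.to_subtype
  haveI : Finite Tn := hTn_fin.to_subtype
  -- counting
  have count : ∀ f : (Fin m → AddCircle (1:ℚ)) →+ (Fin m → AddCircle (1:ℚ)),
      Nat.card A = Nat.card ((A.map f) : Type _) * Nat.card ((f.comp A.subtype).ker) := by
    intro f
    have h1 := AddSubgroup.card_eq_card_quotient_mul_card_addSubgroup (f.comp A.subtype).ker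
    have h2 : Nat.card (A ⧸ (f.comp A.subtype).ker) = Nat.card (A.map f : Type _) := by
      have := Nat.card_congr (QuotientAddGroup.quotientKerEquivRange (f.comp A.subtype)).toEquiv
      rw [this]
      congr 1
      rw [AddMonoidHom.range_comp, AddSubgroup.range_subtype]
    rw [h1, h2]
  have hkerj : Nat.card ((j.comp A.subtype).ker) = Nat.card j.ker := by
    have he : (j.comp A.subtype).ker = j.ker.addSubgroupOf A := by
      rw [← AddMonoidHom.comap_ker]; rfl
    rw [he]
    exact Nat.card_congr (AddSubgroup.addSubgroupOfEquivOfLe hKA).toEquiv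
  have hkerσ : Nat.card ((σ.comp A.subtype).ker) = Nat.card Tn := by
    have he : (σ.comp A.subtype).ker = Tn.addSubgroupOf A := by
      rw [← AddMonoidHom.comap_ker]; rfl
    rw [he]
    exact Nat.card_congr (AddSubgroup.addSubgroupOfEquivOfLe hTnA).toEquiv
  have heq1 := count j
  have heq2 := count σ
  rw [hkerj] at heq1
  rw [hkerσ, hmapσ] at heq2
  have hKpos : 0 < Nat.card j.ker := Nat.card_pos
  have hcard : Nat.card (A.map j : Type _) = Nat.card Tn := by
    have := heq1.symm.trans heq2
    rw [mul_comm (Nat.card j.ker)] at this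
    exact Nat.eq_of_mul_eq_mul_right hKpos this
  have hfinal : A.map j = Tn :=
    AddSubgroup.eq_of_le_of_card_ge hjATn (le_of_eq hcard.symm)
  have hy : y ∈ Tn := (hmemTn y).mpr hny
  rw [← hfinal] at hy
  obtain ⟨x, _, hxy⟩ := hy
  exact ⟨x, hxy⟩
end

section
/- Let b₁, …, b_n and d be nonzero rational numbers, and let F = ℚ(√−1, ⁴√b₁, …, ⁴√b_n) ⊂ ℚ̄. Then the polynomial t⁴ − d splits completely in F if and only if the class of d in ℚ*/ℚ*⁴ belongs to the subgroup generated by the classes of −4 and b₁, …, b_n. -/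
/-!
STATEMENT 7: Let `b₁, …, bₙ, d` be nonzero rationals and
`F = ℚ(√−1, ⁴√b₁, …, ⁴√bₙ) ⊆ ℚ̄`.  Then `t⁴ − d` splits completely in `F`
iff the class of `d` in `ℚ*/ℚ*⁴` lies in the subgroup generated by the
classes of `−4` and the `bᵢ`.
-/

open Polynomial IntermediateField


/-- Every element of `K[β]` with `β² ∈ K` has the form `x + y β`. -/
lemma repr_adjoin {K L : Type*} [Field K] [Field L] [Algebra K L]
    (w : K) (β : L) (hβ : β ^ 2 = algebraMap K L w)
    {α : L} (hα : α ∈ Algebra.adjoin K {β}) :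
    ∃ x y : K, α = algebraMap K L x + algebraMap K L y * β := by
  induction hα using Algebra.adjoin_induction with
  | mem z hz =>
    rw [Set.mem_singleton_iff] at hz
    exact ⟨0, 1, by simp [hz]⟩
  | algebraMap r => exact ⟨r, 0, by simp⟩
  | add a b _ _ ha hb =>
    obtain ⟨x, y, rfl⟩ := ha; obtain ⟨x', y', rfl⟩ := hb
    exact ⟨x + x', y + y', by simp only [map_add]; ring⟩
  | mul a b _ _ ha hb =>
    obtain ⟨x, y, rfl⟩ := ha; obtain ⟨x', y', rfl⟩ := hb
    refine ⟨x * x' + y * y' * w, x * y' + x' * y, ?_⟩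
    simp only [map_add, map_mul]
    linear_combination (algebraMap K L y * algebraMap K L y') * hβ

/-- Key elementary computation: if `β² ∈ K` and `α ∈ K[β]` has `α⁴ ∈ K`, then
`α⁴` is, modulo fourth powers in `K`, either trivial, `w²`, or `-4`. -/
lemma quadGen {K L : Type*} [Field K] [Field L] [Algebra K L] [CharZero K]
    (w : K) (β : L) (hβ : β ^ 2 = algebraMap K L w)
    {α : L} (hα : α ∈ Algebra.adjoin K {β}) (c : K) (hc : α ^ 4 = algebraMap K L c) :
    ∃ γ : K, c = γ ^ 4 ∨ c = w ^ 2 * γ ^ 4 ∨ c = -4 * γ ^ 4 := by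
  obtain ⟨x, y, rfl⟩ := repr_adjoin w β hβ hα
  have hinj : Function.Injective (algebraMap K L) := (algebraMap K L).injective
  by_cases hdep : ∃ t : K, algebraMap K L t = β
  · obtain ⟨t, rfl⟩ := hdep
    refine ⟨x + y * t, Or.inl ?_⟩
    apply hinj
    rw [← hc]
    simp only [map_add, map_mul, map_pow]
  · push_neg at hdep
    have key : ∀ a b : K, algebraMap K L a + algebraMap K L b * β = 0 → a = 0 ∧ b = 0 := by
      intro a b h
      by_cases hb0 : b = 0
      · subst hb0
        refine ⟨hinj ?_, rfl⟩
        simpa using h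
      · exfalso
        have hAb : algebraMap K L b ≠ 0 := fun h0 => hb0 (hinj (by simpa using h0))
        refine hdep (-(a / b)) ?_
        rw [map_neg, map_div₀]
        field_simp
        linear_combination -h
    have h2 : (algebraMap K L x + algebraMap K L y * β) ^ 2 =
        algebraMap K L (x ^ 2 + y ^ 2 * w) + algebraMap K L (2 * x * y) * β := by
      simp only [map_add, map_mul, map_pow, map_ofNat]
      linear_combination (algebraMap K L y) ^ 2 * hβ
    have h4 : (algebraMap K L x + algebraMap K L y * β) ^ 4 =
        algebraMap K L ((x ^ 2 + y ^ 2 * w) ^ 2 + 4 * x ^ 2 * y ^ 2 * w) +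
          algebraMap K L (4 * x * y * (x ^ 2 + y ^ 2 * w)) * β := by
      have h44 : (algebraMap K L x + algebraMap K L y * β) ^ 4 =
          ((algebraMap K L x + algebraMap K L y * β) ^ 2) ^ 2 := by ring
      rw [h44, h2]
      simp only [map_add, map_mul, map_pow, map_ofNat]
      linear_combination (2 * algebraMap K L x * algebraMap K L y) ^ 2 * hβ
    have heq : algebraMap K L ((x ^ 2 + y ^ 2 * w) ^ 2 + 4 * x ^ 2 * y ^ 2 * w - c) +
        algebraMap K L (4 * x * y * (x ^ 2 + y ^ 2 * w)) * β = 0 := by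
      rw [map_sub]
      linear_combination hc - h4
    obtain ⟨h1, h2'⟩ := key _ _ heq
    have hc1 : c = (x ^ 2 + y ^ 2 * w) ^ 2 + 4 * x ^ 2 * y ^ 2 * w := by linear_combination -h1
    have hxyw : x = 0 ∨ y = 0 ∨ x ^ 2 + y ^ 2 * w = 0 := by
      have h4ne : (4 : K) ≠ 0 := by norm_num
      rcases mul_eq_zero.mp h2' with h | h
      · rcases mul_eq_zero.mp h with h' | h'
        · rcases mul_eq_zero.mp h' with h'' | h''
          · exact absurd h'' h4ne
          · exact Or.inl h''
        · exact Or.inr (Or.inl h')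
      · exact Or.inr (Or.inr h)
    rcases hxyw with h | h | h
    · subst h
      exact ⟨y, Or.inr (Or.inl (by linear_combination hc1))⟩
    · subst h
      exact ⟨x, Or.inl (by linear_combination hc1)⟩
    · exact ⟨x, Or.inr (Or.inr (by linear_combination hc1 + (x ^ 2 + y ^ 2 * w + 4 * x ^ 2) * h))⟩

/-- Quadratic descent step, using `i ∈ K` to absorb `-4` into a fourth power. -/
lemma quadStep {K L : Type*} [Field K] [Field L] [Algebra K L] [CharZero K]
    (s : K) (hs : s ^ 2 = -1) (w : K) (β : L) (hβ : β ^ 2 = algebraMap K L w)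
    {α : L} (hα : α ∈ Algebra.adjoin K {β}) (c : K) (hc : α ^ 4 = algebraMap K L c) :
    ∃ (k : ℕ) (γ : K), c = w ^ (2 * k) * γ ^ 4 := by
  obtain ⟨γ, h | h | h⟩ := quadGen w β hβ hα c hc
  · exact ⟨0, γ, by simpa using h⟩
  · exact ⟨1, γ, by rw [h]⟩
  · refine ⟨0, (1 + s) * γ, ?_⟩
    rw [h]
    simp only [Nat.mul_zero, pow_zero, one_mul]
    linear_combination (-(γ ^ 4) * (s ^ 2 + 4 * s + 5)) * hs

set_option maxHeartbeats 1000000 in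
lemma quarticStep {K L : Type*} [Field K] [Field L] [Algebra K L] [CharZero K]
    (s : K) (hs : s ^ 2 = -1) (b : K) (hb : b ≠ 0) (β : L)
    (hβ : β ^ 4 = algebraMap K L b)
    {α : L} (hα : α ∈ Algebra.adjoin K {β}) (c : K) (hc : α ^ 4 = algebraMap K L c) :
    ∃ (k : ℕ) (γ : K), c = b ^ k * γ ^ 4 := by
  set K₂ : IntermediateField K L := K⟮β ^ 2⟯ with hK₂
  have hmem2 : β ^ 2 ∈ K₂ := IntermediateField.mem_adjoin_simple_self K (β ^ 2)
  haveI : CharZero K₂ := charZero_of_injective_algebraMap (algebraMap K K₂).injective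
  have hs₂ : (algebraMap K K₂ s) ^ 2 = -1 := by rw [← map_pow, hs, map_neg, map_one]
  have hβ₂ : β ^ 2 = algebraMap K₂ L (⟨β ^ 2, hmem2⟩ : K₂) := rfl
  have hα₂ : α ∈ Algebra.adjoin K₂ {β} := by
    have hsub : ({β} : Set L) ⊆ ((Algebra.adjoin K₂ {β}).restrictScalars K : Set L) := by
      exact Set.singleton_subset_iff.mpr (Algebra.subset_adjoin (Set.mem_singleton β))
    exact (Subalgebra.mem_restrictScalars K).mp (Algebra.adjoin_le hsub hα)
  have hc₂ : α ^ 4 = algebraMap K₂ L (algebraMap K K₂ c) := by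
    rw [← IsScalarTower.algebraMap_apply, hc]
  obtain ⟨k₁, γ₁, h₁⟩ := quadStep (algebraMap K K₂ s) hs₂ _ β hβ₂ hα₂ _ hc₂
  have hAb : algebraMap K L b ≠ 0 := by
    simpa using (map_ne_zero_iff _ (algebraMap K L).injective).mpr hb
  -- push h₁ down to L
  have h₁L : algebraMap K L c = (algebraMap K L b) ^ k₁ * (algebraMap K₂ L γ₁) ^ 4 := by
    have h := congrArg (algebraMap K₂ L) h₁
    rw [← IsScalarTower.algebraMap_apply, map_mul, map_pow, map_pow, ← hβ₂] at h
    rw [h, ← pow_mul, show 2 * (2 * k₁) = 4 * k₁ by ring, pow_mul, hβ, ← map_pow]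
  have hγ₁mem : algebraMap K₂ L γ₁ ∈ Algebra.adjoin K {β ^ 2} := by
    have hint : IsIntegral K (β ^ 2) := by
      refine ⟨X ^ 2 - C b, monic_X_pow_sub_C b two_ne_zero, ?_⟩
      simp only [eval₂_sub, eval₂_pow, eval₂_X, eval₂_C]
      rw [show (β ^ 2) ^ 2 = β ^ 4 by ring, hβ, sub_self]
    rw [← IntermediateField.adjoin_simple_toSubalgebra_of_isAlgebraic hint.isAlgebraic]
    exact (IntermediateField.mem_toSubalgebra _ _).mpr γ₁.2
  have hβ4 : (β ^ 2) ^ 2 = algebraMap K L b := by rw [show (β ^ 2) ^ 2 = β ^ 4 by ring, hβ]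
  have hc' : (algebraMap K₂ L γ₁) ^ 4 = algebraMap K L (c / b ^ k₁) := by
    rw [map_div₀, map_pow, eq_div_iff (pow_ne_zero _ hAb)]
    linear_combination -h₁L
  obtain ⟨k₂, γ, h₂⟩ := quadStep s hs b (β ^ 2) hβ4 hγ₁mem _ hc'
  refine ⟨k₁ + 2 * k₂, γ, ?_⟩
  rw [div_eq_iff (pow_ne_zero _ hb)] at h₂
  rw [pow_add]
  linear_combination h₂

/-- Base case: a fourth power from `ℚ(i)` lying in `ℚ` is `(-4)^e · q⁴`. -/
lemma baseCase {L : Type*} [Field L] [Algebra ℚ L] (s : L) (hs : s ^ 2 = -1)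
    {α : L} (hα : α ∈ Algebra.adjoin ℚ {s}) (c : ℚ) (hc : α ^ 4 = algebraMap ℚ L c) :
    ∃ (e₀ : ℕ) (q : ℚ), c = (-4) ^ e₀ * q ^ 4 := by
  have hβ : s ^ 2 = algebraMap ℚ L (-1) := by rw [hs, map_neg, map_one]
  obtain ⟨γ, h | h | h⟩ := quadGen (-1 : ℚ) s hβ hα c hc
  · exact ⟨0, γ, by rw [h]; ring⟩
  · exact ⟨0, γ, by rw [h]; ring⟩
  · exact ⟨1, γ, by rw [h]; ring⟩

set_option maxHeartbeats 1000000 in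
/-- Tower induction: a rational whose fourth root lies in `ℚ(i, ⁴√b₁, …, ⁴√bₙ)` is
`(-4)^e₀ ∏ bᵢ^kᵢ q⁴`. -/
lemma tower {L : Type*} [Field L] [Algebra ℚ L] (s : L) (hs : s ^ 2 = -1) :
    ∀ (n : ℕ) (b : Fin n → ℚ) (r : Fin n → L),
      (∀ i, r i ^ 4 = algebraMap ℚ L (b i)) → (∀ i, b i ≠ 0) →
      ∀ α : L, α ∈ IntermediateField.adjoin ℚ ({s} ∪ Set.range r) →
      ∀ c : ℚ, α ^ 4 = algebraMap ℚ L c →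
      ∃ (e₀ : ℕ) (k : Fin n → ℕ) (q : ℚ),
        c = (-4 : ℚ) ^ e₀ * (∏ i, b i ^ k i) * q ^ 4 := by
  intro n
  induction n with
  | zero =>
    intro b r hr hb α hα c hc
    rw [Set.range_eq_empty r, Set.union_empty] at hα
    have hint : IsIntegral ℚ s := by
      refine ⟨X ^ 2 - C (-1), monic_X_pow_sub_C (-1) two_ne_zero, ?_⟩
      rw [eval₂_sub, eval₂_pow, eval₂_X, eval₂_C, hs, map_neg, map_one, sub_self]
    have hα' : α ∈ Algebra.adjoin ℚ {s} := by
      rw [← IntermediateField.adjoin_simple_toSubalgebra_of_isAlgebraic hint.isAlgebraic]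
      exact (IntermediateField.mem_toSubalgebra _ _).mpr hα
    obtain ⟨e₀, q, h⟩ := baseCase s hs hα' c hc
    exact ⟨e₀, fun i => 0, q, by simpa using h⟩
  | succ m ih =>
    intro b r hr hb α hα c hc
    set K : IntermediateField ℚ L :=
      IntermediateField.adjoin ℚ ({s} ∪ Set.range (fun i : Fin m => r i.castSucc)) with hK
    set β := r (Fin.last m) with hβdef
    have hsK : s ∈ K := IntermediateField.subset_adjoin ℚ _ (Set.mem_union_left _ rfl)
    have hrK : ∀ i : Fin m, r i.castSucc ∈ K :=
      fun i => IntermediateField.subset_adjoin ℚ _ (Set.mem_union_right _ ⟨i, rfl⟩)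
    haveI : CharZero K := charZero_of_injective_algebraMap (algebraMap ℚ K).injective
    set sK : K := ⟨s, hsK⟩ with hsKdef
    have hsK2 : sK ^ 2 = -1 := by
      apply Subtype.coe_injective
      push_cast
      exact hs
    set bK : K := algebraMap ℚ K (b (Fin.last m)) with hbKdef
    have hbK0 : bK ≠ 0 := (map_ne_zero_iff _ (algebraMap ℚ K).injective).mpr (hb _)
    have hβ4 : β ^ 4 = algebraMap K L bK := by
      rw [hr, hbKdef, ← IsScalarTower.algebraMap_apply]
    have hint : IsIntegral K β := by
      refine ⟨X ^ 4 - C bK, monic_X_pow_sub_C bK four_ne_zero, ?_⟩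
      simp only [eval₂_sub, eval₂_pow, eval₂_X, eval₂_C, hβ4, sub_self]
    have hαK : α ∈ Algebra.adjoin K {β} := by
      have hle : IntermediateField.adjoin ℚ ({s} ∪ Set.range r) ≤
          (IntermediateField.adjoin K {β}).restrictScalars ℚ := by
        rw [IntermediateField.adjoin_le_iff]
        intro x hx
        rw [SetLike.mem_coe, IntermediateField.mem_restrictScalars]
        rcases hx with hx | ⟨i, rfl⟩
        · rw [Set.mem_singleton_iff] at hx
          rw [hx]
          exact (IntermediateField.adjoin K {β}).algebraMap_mem sK
        · rcases Fin.eq_castSucc_or_eq_last i with ⟨j, rfl⟩ | rfl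
          · exact (IntermediateField.adjoin K {β}).algebraMap_mem ⟨r j.castSucc, hrK j⟩
          · exact IntermediateField.subset_adjoin K _ rfl
      have hmem := hle hα
      rw [IntermediateField.mem_restrictScalars] at hmem
      rw [← IntermediateField.adjoin_simple_toSubalgebra_of_isAlgebraic hint.isAlgebraic]
      exact (IntermediateField.mem_toSubalgebra _ _).mpr hmem
    have hcK : α ^ 4 = algebraMap K L (algebraMap ℚ K c) := by
      rw [← IsScalarTower.algebraMap_apply, hc]
    obtain ⟨k₀, γ, hγ⟩ := quarticStep sK hsK2 bK hbK0 β hβ4 hαK _ hcK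
    -- push down to L and divide
    have hbL : algebraMap ℚ L (b (Fin.last m)) ≠ 0 :=
      (map_ne_zero_iff _ (algebraMap ℚ L).injective).mpr (hb _)
    have hγL : (algebraMap K L γ) ^ 4 =
        algebraMap ℚ L (c / b (Fin.last m) ^ k₀) := by
      have h := congrArg (algebraMap K L) hγ
      rw [hbKdef] at h
      rw [← IsScalarTower.algebraMap_apply, map_mul, map_pow, map_pow,
        ← IsScalarTower.algebraMap_apply] at h
      rw [map_div₀, map_pow, eq_div_iff (pow_ne_zero _ hbL)]
      linear_combination -h
    have hγmem : algebraMap K L γ ∈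
        IntermediateField.adjoin ℚ ({s} ∪ Set.range (fun i : Fin m => r i.castSucc)) := γ.2
    obtain ⟨e₀, k', q, hq⟩ := ih (fun i => b i.castSucc) (fun i => r i.castSucc)
      (fun i => hr _) (fun i => hb _) (algebraMap K L γ) hγmem _ hγL
    refine ⟨e₀, Fin.snoc k' k₀, q, ?_⟩
    rw [div_eq_iff (pow_ne_zero _ (hb _))] at hq
    rw [Fin.prod_univ_castSucc]
    simp only [Fin.snoc_castSucc, Fin.snoc_last]
    linear_combination hq

set_option maxHeartbeats 1000000 in
theorem statement_7 (n : ℕ) (b : Fin n → ℚ) (hb : ∀ i, b i ≠ 0) (d : ℚ) (hd : d ≠ 0)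
    (s : AlgebraicClosure ℚ) (hs : s ^ 2 = -1)
    (r : Fin n → AlgebraicClosure ℚ) (hr : ∀ i, r i ^ 4 = algebraMap ℚ (AlgebraicClosure ℚ) (b i))
    (F : IntermediateField ℚ (AlgebraicClosure ℚ))
    (hF : F = IntermediateField.adjoin ℚ ({s} ∪ Set.range r)) :
    Polynomial.Splits ((X ^ 4 - C (algebraMap ℚ F d)).map (RingHom.id F)) ↔
      ∃ (e₀ : ℤ) (e : Fin n → ℤ) (q : ℚ), q ≠ 0 ∧
        d = (-4 : ℚ) ^ e₀ * (∏ i, b i ^ e i) * q ^ 4 := by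
  constructor
  · intro hsp
    have hdeg : (X ^ 4 - C (algebraMap ℚ F d) : Polynomial F).degree ≠ 0 := by
      rw [degree_X_pow_sub_C (by norm_num : 0 < 4)]
      norm_num
    obtain ⟨A, hA⟩ := (by rw [Polynomial.map_id] at hsp; exact hsp : Splits (X ^ 4 - C (algebraMap ℚ F d))).exists_eval_eq_zero hdeg
    have hA4 : A ^ 4 = algebraMap ℚ F d := by
      simp only [eval_sub, eval_pow, eval_X, eval_C, RingHom.id_apply] at hA
      linear_combination hA
    have hmem : algebraMap F (AlgebraicClosure ℚ) A ∈
        IntermediateField.adjoin ℚ ({s} ∪ Set.range r) := by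
      rw [IntermediateField.algebraMap_apply, ← hF]
      exact A.2
    have hA4' : (algebraMap F (AlgebraicClosure ℚ) A) ^ 4 =
        algebraMap ℚ (AlgebraicClosure ℚ) d := by
      rw [← map_pow, hA4, ← IsScalarTower.algebraMap_apply]
    obtain ⟨e₀, k, q, h⟩ := tower s hs n b r hr hb _ hmem d hA4'
    have hq0 : q ≠ 0 := by
      rintro rfl
      rw [show ((0:ℚ) ^ 4 = 0) by norm_num, mul_zero] at h
      exact hd h
    refine ⟨(e₀ : ℤ), fun i => (k i : ℤ), q, hq0, ?_⟩
    simp only [zpow_natCast]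
    exact h
  · rintro ⟨e₀, e, q, hq0, heq⟩
    subst hF
    have hsF : s ∈ IntermediateField.adjoin ℚ ({s} ∪ Set.range r) :=
      IntermediateField.subset_adjoin ℚ _ (Set.mem_union_left _ rfl)
    have hrF : ∀ i, r i ∈ IntermediateField.adjoin ℚ ({s} ∪ Set.range r) :=
      fun i => IntermediateField.subset_adjoin ℚ _ (Set.mem_union_right _ ⟨i, rfl⟩)
    set F : IntermediateField ℚ (AlgebraicClosure ℚ) :=
      IntermediateField.adjoin ℚ ({s} ∪ Set.range r) with hFdef
    set S : F := ⟨s, hsF⟩ with hSdef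
    have hS : S ^ 2 = -1 := by
      apply Subtype.coe_injective
      push_cast
      exact hs
    set R : Fin n → F := fun i => ⟨r i, hrF i⟩ with hRdef
    have hR : ∀ i, (R i) ^ 4 = algebraMap ℚ F (b i) := by
      intro i
      apply Subtype.coe_injective
      push_cast
      rw [hr i, IsScalarTower.algebraMap_apply ℚ F (AlgebraicClosure ℚ)]
      rfl
    have hzp : ∀ (x : F) (m : ℤ), (x ^ m) ^ (4 : ℕ) = (x ^ (4 : ℕ)) ^ m := by
      intro x m
      rw [← zpow_natCast (x ^ m), ← zpow_natCast x, ← zpow_mul, ← zpow_mul, mul_comm]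
    have h1S : (1 + S) ^ (4 : ℕ) = algebraMap ℚ F (-4) := by
      have h4 : algebraMap ℚ F (-4) = (-4 : F) := by
        rw [map_neg]
        norm_num
      rw [h4]
      linear_combination (S ^ 2 + 4 * S + 5) * hS
    set A : F := (1 + S) ^ e₀ * (∏ i, R i ^ e i) * algebraMap ℚ F q with hAdef
    have hprod : (∏ i, R i ^ e i) ^ (4 : ℕ) = ∏ i, (algebraMap ℚ F (b i)) ^ e i := by
      rw [← Finset.prod_pow]
      exact Finset.prod_congr rfl fun i _ => by rw [hzp, hR i]
    have hA4 : A ^ 4 = algebraMap ℚ F d := by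
      rw [heq, map_mul, map_mul, map_zpow₀, map_pow]
      rw [show algebraMap ℚ F (∏ i, b i ^ e i) = ∏ i, (algebraMap ℚ F (b i)) ^ e i by
        rw [map_prod]; exact Finset.prod_congr rfl fun i _ => (map_zpow₀ _ _ _)]
      rw [hAdef, mul_pow, mul_pow, hzp, h1S, hprod]
    have hfac : (X ^ 4 - C (algebraMap ℚ F d) : Polynomial F) =
        (X - C A) * (X - C (-A)) * (X - C (S * A)) * (X - C (-(S * A))) := by
      rw [← hA4]
      have hCS : (C S : Polynomial F) ^ 2 = -1 := by rw [← map_pow, hS, map_neg, map_one]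
      simp only [map_neg, map_mul, map_pow]
      linear_combination (X ^ 2 * (C A) ^ 2 - (C A) ^ 4) * hCS
    rw [hfac, Polynomial.map_id]
    exact Splits.mul (Splits.mul (Splits.mul (Splits.X_sub_C _) (Splits.X_sub_C _))
      (Splits.X_sub_C _)) (Splits.X_sub_C _)
end

section
/- Let G be a finite group of order 2ⁿ acting on a torsion abelian 2-primary group M. If the invariant subgroup M^G is killed by 2^m and the 4-torsion subgroup M₄ is contained in M^G, then M is killed by 2^{m+n}. -/
/-- If `σ • d = -d`, `d` is 2-power torsion, and `M₄` is fixed, then `2 • d = 0`. -/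
private lemma two_nsmul_eq_zero_aux {G : Type*} [Group G] {M : Type*} [AddCommGroup M]
    [DistribMulAction G M]
    (h4 : ∀ x : M, (4 : ℕ) • x = 0 → ∀ g : G, g • x = x)
    (σ : G) (d : M) (hd : σ • d = -d) :
    ∀ k : ℕ, (2 ^ k : ℕ) • d = 0 → (2 : ℕ) • d = 0 := by
  intro k
  induction k with
  | zero =>
    intro hk
    simp only [pow_zero, one_smul] at hk
    simp [hk]
  | succ k ih =>
    intro hk
    match k, ih, hk with
    | 0, _, hk => simpa using hk
    | (j+1), ih, hk =>
      apply ih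
      set a : M := (2 ^ j : ℕ) • d with ha
      have h4a : (4 : ℕ) • a = 0 := by
        rw [ha, smul_smul]
        have : (4 * 2 ^ j : ℕ) = 2 ^ (j + 1 + 1) := by ring
        rw [this]; exact hk
      have hfix : σ • a = a := h4 a h4a σ
      have hneg : σ • a = -a := by
        rw [ha]
        rw [smul_comm σ (2 ^ j : ℕ) d, hd, smul_neg]
      have : a + a = 0 := by
        have := hfix.symm.trans hneg
        linear_combination (norm := abel) this
      show (2 ^ (j+1) : ℕ) • d = 0
      rw [pow_succ, mul_comm, mul_smul, two_smul]
      rw [ha] at this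
      exact this

private lemma key_aux (n : ℕ) :
    ∀ (G : Type u) (M : Type v) [Group G] [AddCommGroup M] [DistribMulAction G M] (m : ℕ),
    Nat.card G = 2 ^ n →
    (∀ x : M, ∃ k : ℕ, (2 ^ k : ℕ) • x = 0) →
    (∀ x : M, (∀ g : G, g • x = x) → (2 ^ m : ℕ) • x = 0) →
    (∀ x : M, (4 : ℕ) • x = 0 → ∀ g : G, g • x = x) →
    ∀ x : M, (2 ^ (m + n) : ℕ) • x = 0 := by
  induction n with
  | zero =>
    intro G M _ _ _ m hG htors hinv h4 x
    rw [pow_zero] at hG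
    obtain ⟨hsub, _⟩ := Nat.card_eq_one_iff_unique.mp hG
    rw [Nat.add_zero]
    exact hinv x (fun g => by rw [Subsingleton.elim g 1, one_smul])
  | succ n ih =>
    intro G M _ _ _ m hG htors hinv h4
    haveI : Finite G := Nat.finite_of_card_ne_zero (by rw [hG]; positivity)
    haveI : Fintype G := Fintype.ofFinite G
    haveI : Nontrivial G := by
      rw [← Finite.one_lt_card_iff_nontrivial, hG]
      exact Nat.one_lt_two_pow (by omega)
    have hpG : IsPGroup 2 G := IsPGroup.of_card hG
    haveI : Fact (Nat.Prime 2) := ⟨Nat.prime_two⟩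
    haveI := hpG.center_nontrivial
    haveI : Fintype ↥(Subgroup.center G) := Fintype.ofFinite _
    -- find a central element of order 2
    have hdvd : (2 : ℕ) ∣ Fintype.card ↥(Subgroup.center G) := by
      have h1 : Nat.card ↥(Subgroup.center G) ∣ 2 ^ (n+1) := by
        rw [← hG]; exact Subgroup.card_subgroup_dvd_card _
      obtain ⟨k, _, hk⟩ := (Nat.dvd_prime_pow Nat.prime_two).mp h1
      have hne : Nat.card ↥(Subgroup.center G) ≠ 1 :=
        (Finite.one_lt_card_iff_nontrivial.mpr ‹_›).ne'
      rw [← Nat.card_eq_fintype_card, hk]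
      refine dvd_pow_self 2 ?_
      rintro rfl; rw [pow_zero] at hk; exact hne hk
    obtain ⟨z, hz⟩ := exists_prime_orderOf_dvd_card 2 hdvd
    set σ : G := (z : G) with hσdef
    have hσord : orderOf σ = 2 := by rw [hσdef, Subgroup.orderOf_coe, hz]
    have hσc : σ ∈ Subgroup.center G := z.2
    have hσsq : ∀ x : M, σ • σ • x = x := by
      intro x
      rw [smul_smul, ← sq, ← hσord, pow_orderOf_eq_one, one_smul]
    set Hσ : Subgroup G := Subgroup.zpowers σ with hHdef
    haveI hnorm : Hσ.Normal := by
      constructor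
      intro a ha g
      have hac : a ∈ Subgroup.center G := Subgroup.zpowers_le.mpr hσc ha
      have : g * a * g⁻¹ = a := by
        rw [Subgroup.mem_center_iff.mp hac g]
        group
      rw [this]; exact ha
    -- fixed points of σ
    set N : AddSubgroup M := {
      carrier := {x | σ • x = x}
      zero_mem' := smul_zero σ
      add_mem' := fun {a b} ha hb => by
        simp only [Set.mem_setOf_eq] at *
        rw [smul_add, ha, hb]
      neg_mem' := fun {a} ha => by
        simp only [Set.mem_setOf_eq] at *
        rw [smul_neg, ha] } with hNdef
    have hmemN : ∀ x : M, x ∈ N ↔ σ • x = x := fun x => Iff.rfl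
    have hNstable : ∀ (g : G) (x : M), x ∈ N → g • x ∈ N := by
      intro g x hx
      rw [hmemN] at *
      rw [smul_smul, ← Subgroup.mem_center_iff.mp hσc g, mul_smul, hx]
    have hfixH : ∀ a ∈ Hσ, ∀ x : M, x ∈ N → a • x = x := by
      intro a ha x hx
      have : σ ∈ MulAction.stabilizer G x := MulAction.mem_stabilizer_iff.mpr hx
      exact MulAction.mem_stabilizer_iff.mp
        (Subgroup.zpowers_le.mpr this ha)
    -- the action of G ⧸ Hσ on N
    let φ : G →* AddMonoid.End N := {
      toFun := fun g => {
        toFun := fun x => ⟨g • (x : M), hNstable g x x.2⟩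
        map_zero' := by ext; simp
        map_add' := fun x y => by ext; simp [smul_add] }
      map_one' := by ext x; simp; rfl
      map_mul' := fun g h => by ext x; simp [mul_smul]; rfl }
    have hker : Hσ ≤ φ.ker := by
      intro a ha
      rw [MonoidHom.mem_ker]
      ext x
      exact congrArg Subtype.val (Subtype.ext (hfixH a ha x x.2) : _) |>.trans rfl
    let ψ : G ⧸ Hσ →* AddMonoid.End N := QuotientGroup.lift Hσ φ hker
    letI instQ : DistribMulAction (G ⧸ Hσ) N := DistribMulAction.compHom N ψ
    have hsmul : ∀ (g : G) (x : N), ((g : G ⧸ Hσ) • x : N) = ⟨g • (x : M), hNstable g x x.2⟩ :=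
      fun g x => rfl
    have hcard : Nat.card (G ⧸ Hσ) = 2 ^ n := by
      have h1 : Nat.card Hσ = 2 := by rw [hHdef, Nat.card_zpowers, hσord]
      have h2 := Subgroup.card_eq_card_quotient_mul_card_subgroup Hσ
      rw [hG, h1, pow_succ] at h2
      exact Nat.eq_of_mul_eq_mul_right (by norm_num) h2.symm
    have htors' : ∀ x : N, ∃ k : ℕ, (2 ^ k : ℕ) • x = 0 := by
      intro x
      obtain ⟨k, hk⟩ := htors (x : M)
      exact ⟨k, Subtype.ext (by simpa [AddSubmonoidClass.coe_nsmul] using hk)⟩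
    have hinv' : ∀ x : N, (∀ q : G ⧸ Hσ, q • x = x) → (2 ^ m : ℕ) • x = 0 := by
      intro x hx
      have hfix : ∀ g : G, g • (x : M) = x := by
        intro g
        have := hx (g : G ⧸ Hσ)
        rw [hsmul g x] at this
        exact congrArg Subtype.val this
      exact Subtype.ext (by simpa [AddSubmonoidClass.coe_nsmul] using hinv (x : M) hfix)
    have h4' : ∀ x : N, (4:ℕ) • x = 0 → ∀ q : G ⧸ Hσ, q • x = x := by
      intro x hx q
      obtain ⟨g, rfl⟩ := QuotientGroup.mk_surjective q
      have h4x : (4:ℕ) • (x : M) = 0 := by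
        simpa [AddSubmonoidClass.coe_nsmul] using congrArg Subtype.val hx
      rw [hsmul g x]
      exact Subtype.ext (h4 (x : M) h4x g)
    have main := ih (G ⧸ Hσ) N m hcard htors' hinv' h4'
    intro x
    have hy : σ • x + x ∈ N := by
      rw [hmemN, smul_add, hσsq]
      abel
    have h2d : (2:ℕ) • (σ • x - x) = 0 := by
      obtain ⟨k, hk⟩ := htors (σ • x - x)
      refine two_nsmul_eq_zero_aux h4 σ _ ?_ k hk
      rw [smul_sub, hσsq]; abel
    have hd4 : (4:ℕ) • (σ • x - x) = 0 := by
      have h : (4:ℕ) • (σ•x - x) = (2:ℕ) • ((2:ℕ) • (σ•x-x)) := by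
        rw [smul_smul]; norm_num
      rw [h, h2d, smul_zero]
    have hdm : (2 ^ m : ℕ) • (σ • x - x) = 0 := hinv _ (h4 _ hd4)
    have hyz : (2 ^ (m+n) : ℕ) • (σ • x + x) = 0 := by
      have := main ⟨σ • x + x, hy⟩
      simpa [AddSubmonoidClass.coe_nsmul, Subtype.ext_iff] using this
    have hkey : (2 ^ (m + (n+1)) : ℕ) • x
        = (2^(m+n) : ℕ) • (σ•x + x) - (2^(m+n):ℕ) • (σ•x - x) := by
      rw [← smul_sub]
      have h : (σ•x + x) - (σ•x - x) = (2:ℕ) • x := by rw [two_smul]; abel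
      rw [h, smul_smul]
      congr 1
    rw [hkey, hyz]
    have hz2 : (2^(m+n):ℕ) • (σ•x - x) = 0 := by
      have h : (2^(m+n):ℕ) = 2^n * 2^m := by ring
      rw [h, mul_smul, hdm, smul_zero]
    rw [hz2, sub_zero]



/-!
STATEMENT 11: Let `G` be a group of order `2 ^ n` acting (by automorphisms,
i.e. via a `DistribMulAction`) on a torsion abelian 2-primary group `M`.
If the invariant subgroup `M^G` is killed by `2 ^ m` and the 4-torsion
subgroup `M₄` is contained in `M^G`, then `M` is killed by `2 ^ (m + n)`.
-/

theorem statement_11 (G : Type*) [Group G] (M : Type*) [AddCommGroup M]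
    [DistribMulAction G M]
    (n m : ℕ) (hG : Nat.card G = 2 ^ n)
    -- `M` is a torsion 2-primary abelian group:
    (htors : ∀ x : M, ∃ k : ℕ, (2 ^ k : ℕ) • x = 0)
    -- `M^G` is killed by `2 ^ m`:
    (hinv : ∀ x : M, (∀ g : G, g • x = x) → (2 ^ m : ℕ) • x = 0)
    -- `M₄ ⊆ M^G`:
    (h4 : ∀ x : M, (4 : ℕ) • x = 0 → ∀ g : G, g • x = x) :
    ∀ x : M, (2 ^ (m + n) : ℕ) • x = 0 := by
  exact key_aux n G M m hG htors hinv h4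
end
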